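/- arXiv:2101.08302 — 4 statements merged into one kernel-verified Lean document; each statement's English description precedes it below -/
import Mathlib

section
/- Let P and Q be orthomodular posets (quantum logics) and let φ : P → Q be a bijection such that for all a, b in P, a ⊥ b if and only if φ(a) ⊥ φ(b). Then φ is an order isomorphism and φ(a^⊥) = φ(a)^⊥ for all a ∈ P. -/
/-- An orthomodular poset (quantum logic): bounded poset with orthocomplementation. -/
structure QuantumLogic (P : Type*) [PartialOrder P] [OrderBot P] [OrderTop P] where
  compl : P → P
  compl_antitone : ∀ a b : P, a ≤ b → compl b ≤ compl a
  compl_compl : ∀ a : P, compl (compl a) = a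
  isGLB_compl : ∀ a : P, IsGLB {a, compl a} ⊥
  isLUB_compl : ∀ a : P, IsLUB {a, compl a} ⊤
  sup_of_ortho : ∀ a b : P, a ≤ compl b → ∃ c, IsLUB {a, b} c
  orthomodular : ∀ a b : P, a ≤ b → ∃ c, IsGLB {b, compl a} c ∧ IsLUB {a, c} b

/-- A bijection between quantum logics preserving orthogonality (`a ⊥ b` iff `a ≤ b^⊥`)
in both directions is an order isomorphism and preserves orthocomplements. -/
theorem orthoisomorphism_is_order_isomorphism
    {P Q : Type*} [PartialOrder P] [OrderBot P] [OrderTop P]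
    [PartialOrder Q] [OrderBot Q] [OrderTop Q]
    (LP : QuantumLogic P) (LQ : QuantumLogic Q) (φ : P → Q)
    (hbij : Function.Bijective φ)
    (hortho : ∀ a b : P, a ≤ LP.compl b ↔ φ a ≤ LQ.compl (φ b)) :
    (∀ a b : P, a ≤ b ↔ φ a ≤ φ b) ∧ (∀ a : P, φ (LP.compl a) = LQ.compl (φ a)) := by
  have hmono : ∀ a b : P, a ≤ b ↔ φ a ≤ φ b := by
    intro a b
    constructor
    · intro hab
      -- take preimage of compl (φ b)
      obtain ⟨d, hd⟩ := hbij.2 (LQ.compl (φ b))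
      have h1 : φ d ≤ LQ.compl (φ b) := hd.le
      have h2 : d ≤ LP.compl b := (hortho d b).mpr h1
      have h3 : d ≤ LP.compl a := h2.trans (LP.compl_antitone a b hab)
      have h4 : φ d ≤ LQ.compl (φ a) := (hortho d a).mp h3
      rw [hd] at h4
      calc φ a = LQ.compl (LQ.compl (φ a)) := (LQ.compl_compl _).symm
        _ ≤ LQ.compl (LQ.compl (φ b)) := LQ.compl_antitone _ _ h4
        _ = φ b := LQ.compl_compl _
    · intro hab
      have h1 : φ (LP.compl b) ≤ LQ.compl (φ b) := (hortho _ b).mp le_rfl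
      have h2 : LQ.compl (φ b) ≤ LQ.compl (φ a) := LQ.compl_antitone _ _ hab
      have h3 : LP.compl b ≤ LP.compl a := (hortho _ a).mpr (h1.trans h2)
      calc a = LP.compl (LP.compl a) := (LP.compl_compl a).symm
        _ ≤ LP.compl (LP.compl b) := LP.compl_antitone _ _ h3
        _ = b := LP.compl_compl b
  refine ⟨hmono, fun a => ?_⟩
  have h1 : φ (LP.compl a) ≤ LQ.compl (φ a) := (hortho _ a).mp le_rfl
  obtain ⟨d, hd⟩ := hbij.2 (LQ.compl (φ a))
  have h2 : d ≤ LP.compl a := (hortho d a).mpr hd.le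
  have h3 : LQ.compl (φ a) ≤ φ (LP.compl a) := hd ▸ (hmono d (LP.compl a)).mp h2
  exact le_antisymm h1 h3
end

section
/- Let u and v be partial isometries in a unital C*-algebra A (i.e., u u* u = u and v v* v = v). If {v, v, u} = 0, where {a, b, c} = (a b* c + c b* a)/2, then v* u = 0 and u v* = 0. Conversely, if v* u = 0 and u v* = 0 then {v, v, u} = 0. -/
/-- For partial isometries `u, v` in a unital C*-algebra, `{v, v, u} = 0`
(with triple product `{a,b,c} = (a b* c + c b* a)/2`) if and only if
`v* u = 0` and `u v* = 0` (double orthogonality). -/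
theorem tripotent_orthogonal_iff_double_orthogonal
    {A : Type*} [NormedRing A] [StarRing A] [CStarRing A]
    [NormedAlgebra ℂ A] [StarModule ℂ A] [CompleteSpace A]
    (u v : A) (hu : u * star u * u = u) (hv : v * star v * v = v) :
    (2⁻¹ : ℂ) • (v * star v * u + u * star v * v) = 0 ↔
      star v * u = 0 ∧ u * star v = 0 := by
  rw [smul_eq_zero_iff_right (by norm_num : (2⁻¹ : ℂ) ≠ 0)]
  constructor
  · intro h
    have h' : v * star v * u + u * (star v * v) = 0 := by
      rw [← mul_assoc]; exact h
    have h1 : v * star v * u = -(u * (star v * v)) := eq_neg_of_add_eq_zero_left h'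
    have h2 : v * star v * u = u * (star v * v) := by
      have e1 : v * star v * (v * star v * u) = v * star v * u := by
        calc v * star v * (v * star v * u) = (v * star v * v) * (star v * u) := by
              noncomm_ring
        _ = v * (star v * u) := by rw [hv]
        _ = v * star v * u := by rw [mul_assoc]
      calc v * star v * u = v * star v * (v * star v * u) := e1.symm
      _ = v * star v * -(u * (star v * v)) := by rw [h1]
      _ = -(v * star v * u * (star v * v)) := by noncomm_ring
      _ = -(-(u * (star v * v)) * (star v * v)) := by rw [h1]
      _ = u * (star v * (v * star v * v)) := by noncomm_ring
      _ = u * (star v * v) := by rw [hv]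
    have hpu : v * star v * u = 0 := by
      have h3 : (2 : ℂ) • (v * star v * u) = 0 := by
        rw [two_smul]; nth_rewrite 2 [h2]; exact h'
      simpa using (smul_eq_zero_iff_right (by norm_num : (2 : ℂ) ≠ 0)).mp h3
    have huq : u * (star v * v) = 0 := h2 ▸ hpu
    refine ⟨?_, ?_⟩
    · calc star v * u = star (v * star v * v) * u := by rw [hv]
      _ = star v * (v * star v * u) := by simp [star_mul, mul_assoc]
      _ = 0 := by rw [hpu, mul_zero]
    · calc u * star v = u * star (v * star v * v) := by rw [hv]
      _ = u * (star v * v) * star v := by simp [star_mul, mul_assoc]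
      _ = 0 := by rw [huq, zero_mul]
  · rintro ⟨h1, h2⟩
    have e1 : v * star v * u = 0 := by rw [mul_assoc, h1, mul_zero]
    have e2 : u * star v * v = 0 := by rw [h2, zero_mul]
    rw [e1, e2, add_zero]
end

section
/- Let M be a von Neumann algebra and u, v partial isometries with u ≤ v in the tripotent order (i.e., u = u v* u = u u* v). Then the map q ↦ q v is an order isomorphism from the set of projections q ≤ u u* (sub-projections of the final projection of u) onto the set of tripotents w with w ≤ u, ordered by the tripotent order. -/
/-- A tripotent (partial isometry). -/
def IsTripotent {A : Type*} [Ring A] [StarRing A] (u : A) : Prop := u * star u * u = u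

/-- The tripotent order: `u ≤ v` iff `u = u v* u = u u* v`. -/
def TripLe {A : Type*} [Ring A] [StarRing A] (u v : A) : Prop :=
  u = u * star v * u ∧ u = u * star u * v

/-- A projection: self-adjoint idempotent. -/
def IsProjection {A : Type*} [Ring A] [StarRing A] (p : A) : Prop :=
  IsIdempotentElem p ∧ IsSelfAdjoint p

section Aux

open ContinuousLinearMap RCLike

variable {E : Type*} [NormedAddCommGroup E] [InnerProductSpace ℂ E] [CompleteSpace E]

local notation "⟪" x ", " y "⟫" => @inner ℂ _ _ x y

/-- For projections on a Hilbert space, the Loewner order is characterized algebraically. -/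
lemma proj_le_iff_clm {p q : E →L[ℂ] E} (hp1 : p * p = p) (hp2 : IsSelfAdjoint p)
    (hq1 : q * q = q) (hq2 : IsSelfAdjoint q) :
    q ≤ p ↔ p * q = q := by
  have hpadj : ∀ a b : E, ⟪p a, b⟫ = ⟪a, p b⟫ := fun a b => by
    conv_lhs => rw [← (isSelfAdjoint_iff'.mp hp2)]
    exact adjoint_inner_left p b a
  constructor
  · intro h
    have hpos : (p - q).IsPositive := h
    ext x
    rw [ContinuousLinearMap.mul_apply]
    set y := q x with hy
    have hyq : q y = y := by rw [hy, ← ContinuousLinearMap.mul_apply, hq1]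
    have hppy : p (p y) = p y := by rw [← ContinuousLinearMap.mul_apply, hp1]
    have hpy : ⟪p y, y⟫ = ((‖p y‖ ^ 2 : ℝ) : ℂ) := by
      calc ⟪p y, y⟫ = ⟪p (p y), y⟫ := by rw [hppy]
        _ = ⟪p y, p y⟫ := hpadj (p y) y
        _ = ((‖p y‖ ^ 2 : ℝ) : ℂ) := by
            rw [inner_self_eq_norm_sq_to_K]; norm_cast
    have hqy : ⟪q y, y⟫ = ((‖y‖ ^ 2 : ℝ) : ℂ) := by
      rw [hyq, inner_self_eq_norm_sq_to_K]; norm_cast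
    have hre0 : ∀ r : ℝ, re ((r : ℂ)) = r := fun r => by
      simp [RCLike.re_to_complex]
    have hre := hpos.inner_nonneg_left y
    rw [ContinuousLinearMap.sub_apply, inner_sub_left, hpy, hqy, ← Complex.ofReal_sub, Complex.zero_le_real,
      sub_nonneg] at hre
    have hre' : ‖y‖ ^ 2 ≤ ‖p y‖ ^ 2 := hre
    have hinner_re : re ⟪y, p y⟫ = ‖p y‖ ^ 2 := by
      rw [← hpadj y y, hpy, hre0]
    have hpyth : ‖y - p y‖ ^ 2 = ‖y‖ ^ 2 - ‖p y‖ ^ 2 := by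
      rw [norm_sub_sq (𝕜 := ℂ), hinner_re]; ring
    have hz2 : ‖y - p y‖ ^ 2 = 0 := le_antisymm (by rw [hpyth]; linarith) (by positivity)
    have hz : y - p y = 0 := norm_eq_zero.mp (sq_eq_zero_iff.mp hz2)
    exact (sub_eq_zero.mp hz).symm
  · intro h
    have h' : q * p = q := by
      have := congrArg star h
      rwa [star_mul, hp2.star_eq, hq2.star_eq] at this
    have hsq : (p - q) * (p - q) = p - q := by
      calc (p - q) * (p - q) = p * p - q * p - p * q + q * q := by noncomm_ring
        _ = p - q - q + q := by rw [hp1, hq1, h, h']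
        _ = p - q := by abel
    have key : p - q = star (p - q) * (p - q) := by
      rw [star_sub, hp2.star_eq, hq2.star_eq, hsq]
    calc q ≤ q + star (p - q) * (p - q) := le_add_of_nonneg_right (star_mul_self_nonneg _)
      _ = p := by rw [← key]; abel

end Aux

section Sub

variable {H : Type*} [NormedAddCommGroup H] [InnerProductSpace ℂ H] [CompleteSpace H]
  (M : VonNeumannAlgebra H)

/-- Transfer the projection-order characterization to the von Neumann algebra. -/
lemma proj_le_iff_vn {p q : M.toStarSubalgebra} (hp : IsProjection p) (hq : IsProjection q) :
    q ≤ p ↔ p * q = q := by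
  have hcoe : (q : H →L[ℂ] H) ≤ p ↔ (p : H →L[ℂ] H) * q = q := by
    refine proj_le_iff_clm ?_ ?_ ?_ ?_
    · exact_mod_cast congrArg Subtype.val hp.1.eq
    · show star (p : H →L[ℂ] H) = p
      exact congrArg Subtype.val hp.2.star_eq
    · exact_mod_cast congrArg Subtype.val hq.1.eq
    · show star (q : H →L[ℂ] H) = q
      exact congrArg Subtype.val hq.2.star_eq
  have horder : q ≤ p ↔ (q : H →L[ℂ] H) ≤ p := Iff.rfl
  rw [horder, hcoe]
  constructor
  · intro h
    exact Subtype.ext (by exact_mod_cast h)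
  · intro h
    exact_mod_cast congrArg Subtype.val h

/-- In the von Neumann algebra, `x * star x = 0` implies `x = 0`. -/
lemma mul_star_self_eq_zero_vn {x : M.toStarSubalgebra} (h : x * star x = 0) : x = 0 := by
  have hc : (x : H →L[ℂ] H) * star (x : H →L[ℂ] H) = 0 := congrArg Subtype.val h
  have hx0 : (x : H →L[ℂ] H) = 0 := (CStarRing.mul_star_self_eq_zero_iff _).mp hc
  exact Subtype.ext (by exact_mod_cast hx0)

end Sub

set_option maxHeartbeats 2000000 in
/-- In a von Neumann algebra, if `u ≤ v` in the tripotent order, the map `q ↦ q v` is an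
order isomorphism from the projections `q ≤ u u*` onto the tripotents `w ≤ u`. -/
theorem interval_order_iso_final_projection
    {H : Type*} [NormedAddCommGroup H] [InnerProductSpace ℂ H] [CompleteSpace H]
    (M : VonNeumannAlgebra H) (u v : M.toStarSubalgebra)
    (hu : IsTripotent u) (hv : IsTripotent v) (huv : TripLe u v) :
    (∀ q : M.toStarSubalgebra, IsProjection q → q ≤ u * star u →
        IsTripotent (q * v) ∧ TripLe (q * v) u) ∧
    (∀ q q' : M.toStarSubalgebra, IsProjection q → q ≤ u * star u →
        IsProjection q' → q' ≤ u * star u → (q ≤ q' ↔ TripLe (q * v) (q' * v))) ∧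
    (∀ w : M.toStarSubalgebra, IsTripotent w → TripLe w u →
        ∃ q : M.toStarSubalgebra, IsProjection q ∧ q ≤ u * star u ∧ w = q * v) := by
  set p : M.toStarSubalgebra := u * star u with hpdef
  have hu' : u * star u * u = u := hu
  have hp2 : p * p = p := by
    rw [hpdef]
    calc u * star u * (u * star u) = (u * star u * u) * star u := by noncomm_ring
      _ = u * star u := by rw [hu']
  have hpsa : star p = p := by rw [hpdef, star_mul, star_star]
  have hpproj : IsProjection p := ⟨hp2, hpsa⟩
  have hpv : p * v = u := by rw [hpdef]; exact huv.2.symm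
  -- for projections below p, `q * v = q * u`
  have hqv : ∀ q : M.toStarSubalgebra, IsProjection q → q ≤ p → q * v = q * u := by
    intro q hq hle
    have h1 : p * q = q := (proj_le_iff_vn M hpproj hq).mp hle
    have h2 : q * p = q := by
      have := congrArg star h1
      rwa [star_mul, hpsa, hq.2.star_eq] at this
    calc q * v = (q * p) * v := by rw [h2]
      _ = q * (p * v) := by noncomm_ring
      _ = q * u := by rw [hpv]
  -- the basic computation : (q u) (q u)* = q
  have hww : ∀ q : M.toStarSubalgebra, IsProjection q → q ≤ p →
      (q * u) * star (q * u) = q := by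
    intro q hq hle
    have h1 : p * q = q := (proj_le_iff_vn M hpproj hq).mp hle
    have h2 : q * p = q := by
      have := congrArg star h1
      rwa [star_mul, hpsa, hq.2.star_eq] at this
    calc (q * u) * star (q * u) = q * (u * star u) * star q := by
          rw [star_mul]; noncomm_ring
      _ = (q * p) * q := by rw [hq.2.star_eq, hpdef]
      _ = q * q := by rw [h2]
      _ = q := hq.1.eq
  refine ⟨?_, ?_, ?_⟩
  · -- part 1 : `q * v` is a tripotent below `u`
    intro q hq hle
    have hqu : q * v = q * u := hqv q hq hle
    have hq2 : q * q = q := hq.1.eq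
    have hw : (q * u) * star (q * u) = q := hww q hq hle
    have h1 : p * q = q := (proj_le_iff_vn M hpproj hq).mp hle
    have h2 : q * p = q := by
      have := congrArg star h1
      rwa [star_mul, hpsa, hq.2.star_eq] at this
    refine ⟨?_, ?_, ?_⟩
    · show (q * v) * star (q * v) * (q * v) = q * v
      rw [hqu]
      calc (q * u) * star (q * u) * (q * u) = q * (q * u) := by rw [hw]
        _ = (q * q) * u := by noncomm_ring
        _ = q * u := by rw [hq2]
    · show q * v = (q * v) * star u * (q * v)
      rw [hqu]
      calc q * u = (q * q) * u := by rw [hq2]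
        _ = ((q * p) * q) * u := by rw [h2]
        _ = (q * u) * star u * (q * u) := by rw [hpdef]; noncomm_ring
    · show q * v = (q * v) * star (q * v) * u
      rw [hqu, hw]
  · -- part 2 : order isomorphism
    intro q q' hq hleq hq' hleq'
    have hqu : q * v = q * u := hqv q hq hleq
    have hq'u : q' * v = q' * u := hqv q' hq' hleq'
    have hq2 : q * q = q := hq.1.eq
    have hw : (q * u) * star (q * u) = q := hww q hq hleq
    have h1 : p * q = q := (proj_le_iff_vn M hpproj hq).mp hleq
    have h2 : q * p = q := by
      have := congrArg star h1
      rwa [star_mul, hpsa, hq.2.star_eq] at this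
    have h1' : p * q' = q' := (proj_le_iff_vn M hpproj hq').mp hleq'
    have h2' : q' * p = q' := by
      have := congrArg star h1'
      rwa [star_mul, hpsa, hq'.2.star_eq] at this
    rw [hqu, hq'u]
    constructor
    · intro hle
      have ha : q' * q = q := (proj_le_iff_vn M hq' hq).mp hle
      have hb : q * q' = q := by
        have := congrArg star ha
        rwa [star_mul, hq'.2.star_eq, hq.2.star_eq] at this
      refine ⟨?_, ?_⟩
      · calc q * u = (q * q) * u := by rw [hq2]
          _ = ((q * p) * (q' * q)) * u := by rw [h2, ha]
          _ = (q * u) * star (q' * u) * (q * u) := by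
              rw [star_mul, hq'.2.star_eq, hpdef]; noncomm_ring
      · calc q * u = (q * q') * u := by rw [hb]
          _ = (q * u) * star (q * u) * (q' * u) := by rw [hw]; noncomm_ring
    · intro htl
      have hkey : q * u = q * u * star (q * u) * (q' * u) := htl.2
      rw [hw] at hkey
      have hmul : q * u * star u = q * (q' * u) * star u := by
        conv_lhs => rw [hkey]
      have hqp : q * p = q * q' * p := by
        rw [hpdef]
        calc q * (u * star u) = q * u * star u := by noncomm_ring
          _ = q * (q' * u) * star u := hmul
          _ = q * q' * (u * star u) := by noncomm_ring
      have hb : q * q' = q := by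
        calc q * q' = q * (q' * p) := by rw [h2']
          _ = q * q' * p := by noncomm_ring
          _ = q * p := hqp.symm
          _ = q := h2
      have ha : q' * q = q := by
        have := congrArg star hb
        rwa [star_mul, hq'.2.star_eq, hq.2.star_eq] at this
      exact (proj_le_iff_vn M hq' hq).mpr ha
  · -- part 3 : surjectivity
    intro w hw htl
    have hw' : w * star w * w = w := hw
    obtain ⟨hw1, hw2⟩ := htl
    set q : M.toStarSubalgebra := w * star w with hqdef
    have hwq : w = q * u := by rw [hqdef]; exact hw2
    have hqidem : q * q = q := by
      rw [hqdef]
      calc w * star w * (w * star w) = (w * star w * w) * star w := by noncomm_ring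
        _ = w * star w := by rw [hw']
    have hqsa : star q = q := by rw [hqdef, star_mul, star_star]
    have hqproj : IsProjection q := ⟨hqidem, hqsa⟩
    have hws : w * star u = q * p := by
      rw [hpdef]
      calc w * star u = (q * u) * star u := by rw [hwq]
        _ = q * (u * star u) := by noncomm_ring
    have hqpq : q * p * q = q := by
      calc q * p * q = (w * star u) * q := by rw [hws]
        _ = w * star (q * u) := by rw [star_mul, hqsa]; noncomm_ring
        _ = w * star w := by rw [hwq]
        _ = q := hqdef.symm
    have hx : (q - q * p) * star (q - q * p) = 0 := by
      rw [star_sub, hqsa, star_mul, hpsa, hqsa]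
      calc (q - q * p) * (q - p * q)
          = q * q - q * (p * q) - q * p * q + q * (p * p) * q := by noncomm_ring
        _ = q - q * p * q - q * p * q + q * p * q := by
            rw [hqidem, hp2]; noncomm_ring
        _ = 0 := by rw [hqpq]; abel
    have hqp : q * p = q := by
      have hsub : q - q * p = 0 := mul_star_self_eq_zero_vn M hx
      exact (sub_eq_zero.mp hsub).symm
    have h1 : p * q = q := by
      have := congrArg star hqp
      rwa [star_mul, hqsa, hpsa] at this
    have hle : q ≤ p := (proj_le_iff_vn M hpproj hqproj).mpr h1
    refine ⟨q, hqproj, hle, ?_⟩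
    rw [hqv q hqproj hle]
    exact hwq
end

section
/- Let A, B be C*-algebras and Φ : A → B a bounded linear map such that Φ(u) is a partial isometry whenever u is a partial isometry, and A is a von Neumann algebra (so the spectral theorem is available). If e, f are orthogonal partial isometries in A (e* f = 0 = e f*), then Φ(e) and Φ(f) are orthogonal partial isometries in B. -/
set_option maxHeartbeats 1000000
set_option synthInstance.maxHeartbeats 400000

section Aux

variable {R : Type*} [Ring R] [StarRing R]

lemma IsTripotent.star' {u : R} (h : IsTripotent u) : IsTripotent (star u) := by
  have h2 := congrArg star h
  simpa [IsTripotent, star_mul, mul_assoc] using h2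

lemma IsTripotent.idem {w : R} (h : IsTripotent w) :
    (w * star w) * (w * star w) = w * star w := by
  rw [← mul_assoc, h]

end Aux

section Key

variable {B : Type*} [CStarAlgebra B]

lemma half_smul_eq {x y : B} (h : x + x = y + y) : x = y := by
  have h2 : (2 : ℂ) • x = (2 : ℂ) • y := by rw [two_smul, two_smul, h]
  have h3 := congrArg (fun z => (2 : ℂ)⁻¹ • z) h2
  simpa [smul_smul] using h3

lemma orth_right (u v : B) (hu : IsTripotent u) (hv : IsTripotent v)
    (hs : IsTripotent (u + v)) (hd : IsTripotent (u - v)) : u * star v = 0 := by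
  letI := CStarAlgebra.spectralOrder B
  haveI := CStarAlgebra.spectralOrderedRing B
  have hu' : star u * u * star u = star u := by
    have := hu.star'; unfold IsTripotent at this; rwa [star_star] at this
  have hv' : star v * v * star v = star v := by
    have := hv.star'; unfold IsTripotent at this; rwa [star_star] at this
  set p := u * star u with hpdef
  set q := v * star v with hqdef
  set s := u * star v + v * star u with hsdef
  have hp : p * p = p := hu.idem
  have hq : q * q = q := hv.idem
  -- the expansions of (u±v)(u±v)*
  have hw1 : (u + v) * star (u + v) = p + q + s := by
    rw [star_add, hpdef, hqdef, hsdef]; noncomm_ring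
  have hw2 : (u - v) * star (u - v) = p + q - s := by
    rw [star_sub, hpdef, hqdef, hsdef]; noncomm_ring
  have h1 : (p + q + s) * (p + q + s) = p + q + s := by rw [← hw1]; exact hs.idem
  have h2 : (p + q - s) * (p + q - s) = p + q - s := by rw [← hw2]; exact hd.idem
  -- derive s*s = -(p*q + q*p)
  have h3 : (p + q + s) * (p + q + s) + (p + q - s) * (p + q - s)
      = (p + q + s) + (p + q - s) := by rw [h1, h2]
  have expand : (p + q + s) * (p + q + s) + (p + q - s) * (p + q - s)
      = ((p * p + q * q) + (p * p + q * q))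
        + ((s * s + (p * q + q * p)) + (s * s + (p * q + q * p))) := by noncomm_ring
  rw [expand, hp, hq] at h3
  have hr : (p + q + s) + (p + q - s) = ((p + q) + (p + q)) + (0 + 0) := by abel
  rw [hr] at h3
  have h4 : (s * s + (p * q + q * p)) + (s * s + (p * q + q * p)) = 0 + 0 :=
    add_left_cancel h3
  have hD : s * s + (p * q + q * p) = 0 := half_smul_eq h4
  have hss : s * s = -(p * q + q * p) := eq_neg_of_add_eq_zero_left hD
  -- p*q*p = 0 via positivity
  have hsps : star s = s := by rw [hsdef]; simp [star_mul]; abel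
  have hpps : star p = p := by rw [hpdef]; simp [star_mul]
  have hqps : star q = q := by rw [hqdef]; simp [star_mul]
  have hx1 : star (q * p) * (q * p) = p * q * p := by
    rw [star_mul, hpps, hqps]
    calc p * q * (q * p) = p * (q * q) * p := by noncomm_ring
    _ = p * q * p := by rw [hq]
  have hx2 : star (s * p) * (s * p) = -(p * q * p + p * q * p) := by
    rw [star_mul, hpps, hsps]
    calc p * s * (s * p) = p * (s * s) * p := by noncomm_ring
    _ = p * (-(p * q + q * p)) * p := by rw [hss]
    _ = -((p * p) * q * p + p * q * (p * p)) := by noncomm_ring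
    _ = -(p * q * p + p * q * p) := by rw [hp]
  have o1 : 0 ≤ p * q * p := hx1 ▸ star_mul_self_nonneg (q * p)
  have o2 : p * q * p + p * q * p ≤ 0 := by
    have := hx2 ▸ star_mul_self_nonneg (s * p)
    exact neg_nonneg.mp this
  have ha0 : p * q * p = 0 := by
    refine le_antisymm ?_ o1
    calc p * q * p = p * q * p + 0 := by rw [add_zero]
    _ ≤ p * q * p + p * q * p := add_le_add (le_refl _) o1
    _ ≤ 0 := o2
  have hqp : q * p = 0 := by
    have : star (q * p) * (q * p) = 0 := hx1.trans ha0
    exact CStarRing.star_mul_self_eq_zero_iff _ |>.mp this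
  -- s = 0
  have hpq : p * q = 0 := by
    have := congrArg star hqp
    rwa [star_mul, hpps, hqps, star_zero] at this
  have hs0 : s = 0 := by
    have hss0 : star s * s = 0 := by rw [hsps, hss, hpq, hqp]; simp
    exact CStarRing.star_mul_self_eq_zero_iff _ |>.mp hss0
  -- conclude
  have hneg : u * star v = -(v * star u) := by
    have hz : u * star v + v * star u = 0 := by rw [← hsdef]; exact hs0
    exact eq_neg_of_add_eq_zero_left hz
  have hb1 : u * star v = (u * star v) * q := by
    conv_lhs => rw [← hv']
    rw [hqdef]; noncomm_ring
  have hb2 : u * star v = (u * star v) * p := by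
    calc u * star v = -(v * star u) := hneg
    _ = -((v * star u) * p) := by
        conv_lhs => rw [← hu']
        rw [hpdef]; noncomm_ring
    _ = (-(v * star u)) * p := by rw [neg_mul]
    _ = (u * star v) * p := by rw [← hneg]
  calc u * star v = (u * star v) * p := hb2
  _ = ((u * star v) * q) * p := by rw [← hb1]
  _ = (u * star v) * (q * p) := by rw [mul_assoc]
  _ = 0 := by rw [hqp, mul_zero]

lemma orth_both (u v : B) (hu : IsTripotent u) (hv : IsTripotent v)
    (hs : IsTripotent (u + v)) (hd : IsTripotent (u - v)) :
    star u * v = 0 ∧ u * star v = 0 := by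
  refine ⟨?_, orth_right u v hu hv hs hd⟩
  have h1 : IsTripotent (star u + star v) := by
    have := hs.star'; rwa [star_add] at this
  have h2 : IsTripotent (star u - star v) := by
    have := hd.star'; rwa [star_sub] at this
  have := orth_right (star u) (star v) hu.star' hv.star' h1 h2
  rwa [star_star] at this

end Key

/-- Let `A` be a von Neumann algebra and `B` a C*-algebra, and `Φ : A → B` a bounded
linear map sending partial isometries to partial isometries. If `e, f` are orthogonal
partial isometries in `A`, then `Φ e, Φ f` are orthogonal partial isometries in `B`. -/
theorem bounded_tripotent_preserving_map_preserves_orthogonality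
    {H : Type*} [NormedAddCommGroup H] [InnerProductSpace ℂ H] [CompleteSpace H]
    (M : VonNeumannAlgebra H)
    {B : Type*} [NormedRing B] [StarRing B] [CStarRing B]
    [NormedAlgebra ℂ B] [StarModule ℂ B] [CompleteSpace B]
    (Φ : M.toStarSubalgebra →L[ℂ] B)
    (hΦ : ∀ u : M.toStarSubalgebra, IsTripotent u → IsTripotent (Φ u))
    (e f : M.toStarSubalgebra) (he : IsTripotent e) (hf : IsTripotent f)
    (horth : star e * f = 0 ∧ e * star f = 0) :
    IsTripotent (Φ e) ∧ IsTripotent (Φ f) ∧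
      star (Φ e) * Φ f = 0 ∧ Φ e * star (Φ f) = 0 := by
  letI : CStarAlgebra B :=
    { ‹NormedRing B›, ‹StarRing B›, ‹CStarRing B›, ‹NormedAlgebra ℂ B›,
      ‹StarModule ℂ B›, ‹CompleteSpace B› with }
  obtain ⟨h1, h2⟩ := horth
  have h3 : f * star e = 0 := by
    have := congrArg star h2; simpa only [star_mul, star_star, star_zero] using this
  have h4 : star f * e = 0 := by
    have := congrArg star h1; simpa only [star_mul, star_star, star_zero] using this
  have expandp : (e + f) * star (e + f) * (e + f) =
      e * star e * e + e * (star e * f) + (e * star f) * e + (e * star f) * f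
      + ((f * star e) * e + (f * star e) * f + f * (star f * e) + f * star f * f) := by
    rw [star_add]; noncomm_ring
  have hef : IsTripotent (e + f) := by
    unfold IsTripotent
    rw [expandp, h1, h2, h3, h4, he, hf]
    simp only [mul_zero, zero_mul, add_zero, zero_add]
  have expandm : (e - f) * star (e - f) * (e - f) =
      e * star e * e - e * (star e * f) - (e * star f) * e + (e * star f) * f
      + (-((f * star e) * e) + (f * star e) * f + f * (star f * e) - f * star f * f) := by
    rw [star_sub]; noncomm_ring
  have hef' : IsTripotent (e - f) := by
    unfold IsTripotent
    rw [expandm, h1, h2, h3, h4, he, hf]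
    simp only [mul_zero, zero_mul, neg_zero, add_zero, zero_add, sub_zero]
    abel
  have hu : IsTripotent (Φ e) := hΦ e he
  have hv : IsTripotent (Φ f) := hΦ f hf
  have hsum : IsTripotent (Φ e + Φ f) := by
    have := hΦ (e + f) hef; rwa [map_add] at this
  have hdiff : IsTripotent (Φ e - Φ f) := by
    have := hΦ (e - f) hef'; rwa [map_sub] at this
  obtain ⟨o1, o2⟩ := orth_both (Φ e) (Φ f) hu hv hsum hdiff
  exact ⟨hu, hv, o1, o2⟩
end
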